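/- Let d be a positive natural number, let ρ be a density matrix on ℂ² ⊗ ℂ^d, let V be any 2 × 2 unitary matrix, and let σ_z = diag(1, −1). Then the infimum over 2 × 2 unitaries W of ‖ρ − ((W V Wᴴ) ⊗ₖ I_d) ρ ((W V Wᴴ) ⊗ₖ I_d)ᴴ‖₁ is less than or equal to the infimum over 2 × 2 unitaries W of ‖ρ − ((W σ_z Wᴴ) ⊗ₖ I_d) ρ ((W σ_z Wᴴ) ⊗ₖ I_d)ᴴ‖₁. That is, among all local unitary channels on the qubit subsystem with a prescribed spectrum, those with harmonic spectrum {1, −1} yield the largest minimal trace-distance disturbance, and hence the smallest maximal probability of error when discriminating the identity channel from the unitary channel in a quantum reading protocol. -/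

import Mathlib

open Matrix Kronecker
open scoped ComplexOrder

open scoped Classical in
/-- The positive semidefinite square root of a matrix (junk value `0` if not PSD). -/
noncomputable def msqrt {n : Type*} [Fintype n] [DecidableEq n] (A : Matrix n n ℂ) : Matrix n n ℂ :=
  if h : A.PosSemidef then
    (h.1.eigenvectorUnitary : Matrix n n ℂ) * diagonal (((↑) : ℝ → ℂ) ∘ Real.sqrt ∘ h.1.eigenvalues) *
      (star (h.1.eigenvectorUnitary : Matrix n n ℂ))
  else 0

/-- Square-root fidelity `tr √(√ρ · σ · √ρ)` (as a real number). -/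
noncomputable def sqrtFid {n : Type*} [Fintype n] [DecidableEq n] (ρ σ : Matrix n n ℂ) : ℝ :=
  ((msqrt (msqrt ρ * σ * msqrt ρ)).trace).re

/-- Trace norm `tr √(Xᴴ X)` (as a real number). -/
noncomputable def traceNorm {n : Type*} [Fintype n] [DecidableEq n] (X : Matrix n n ℂ) : ℝ :=
  ((msqrt (Xᴴ * X)).trace).re

/-- The Bell-diagonal two-qubit state with Bell-basis eigenvalues `γ₁, γ₂, γ₃, γ₄`. -/
noncomputable def bellDiag (γ₁ γ₂ γ₃ γ₄ : ℝ) :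
    Matrix (Fin 2 × Fin 2) (Fin 2 × Fin 2) ℂ :=
  Matrix.reindex finProdFinEquiv.symm finProdFinEquiv.symm
    ((1 / 2 : ℂ) • !![(γ₁ : ℂ) + γ₂, 0, 0, (γ₁ : ℂ) - γ₂;
        0, (γ₃ : ℂ) + γ₄, (γ₃ : ℂ) - γ₄, 0;
        0, (γ₃ : ℂ) - γ₄, (γ₃ : ℂ) + γ₄, 0;
        (γ₁ : ℂ) - γ₂, 0, 0, (γ₁ : ℂ) + γ₂])

section Aux

set_option maxHeartbeats 2000000

variable {n : Type*} [Fintype n] [DecidableEq n]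


lemma posSemidef_smul' {A : Matrix n n ℂ} (hA : A.PosSemidef) {r : ℝ} (hr : 0 ≤ r) :
    ((r : ℂ) • A).PosSemidef := by
  constructor
  · rw [Matrix.IsHermitian, conjTranspose_smul, Complex.star_def, Complex.conj_ofReal, hA.1]
  · intro x
    exact (hA.smul (a := (r:ℂ)) (Complex.zero_le_real.mpr hr)).2 x

lemma msqrt_eq {A : Matrix n n ℂ} (hA : A.PosSemidef) : msqrt A = cfc Real.sqrt A := by
  rw [msqrt, dif_pos hA, hA.1.cfc_eq]
  rfl

lemma msqrt_psd {A : Matrix n n ℂ} (hA : A.PosSemidef) : (msqrt A).PosSemidef := by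
  rw [msqrt, dif_pos hA, star_eq_conjTranspose]
  refine Matrix.PosSemidef.mul_mul_conjTranspose_same ?_ _
  rw [posSemidef_diagonal_iff]
  intro i
  simp only [Function.comp_apply]
  exact_mod_cast Real.sqrt_nonneg _

lemma msqrt_smul {A : Matrix n n ℂ} (hA : A.PosSemidef) {r : ℝ} (hr : 0 ≤ r) :
    msqrt ((r:ℂ) • A) = (Real.sqrt r : ℂ) • msqrt A := by
  rw [msqrt_eq hA, msqrt_eq (posSemidef_smul' hA hr)]
  have h1 := cfc_comp_const_mul r Real.sqrt A (ha := hA.1)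
  have h2 := cfc_const_mul (√r) Real.sqrt A
  rw [Complex.coe_smul, Complex.coe_smul]
  convert h1.symm.trans ((cfc_congr fun x _ => Real.sqrt_mul hr x).trans h2) using 1

lemma trace_re_nonneg {A : Matrix n n ℂ} (hA : A.PosSemidef) : 0 ≤ A.trace.re := by
  have h : ∀ i, 0 ≤ A i i := fun i => by
    exact hA.diag_nonneg
  rw [Matrix.trace]
  have : (∑ i, A.diag i).re = ∑ i, (A.diag i).re := by
    exact Complex.re_sum Finset.univ A.diag
  rw [this]
  exact Finset.sum_nonneg fun i _ => (Complex.le_def.mp (h i)).1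

lemma traceNorm_nonneg (X : Matrix n n ℂ) : 0 ≤ traceNorm X := by
  unfold traceNorm
  rw [msqrt_eq (Matrix.posSemidef_conjTranspose_mul_self X)]
  have := trace_re_nonneg (msqrt_psd (Matrix.posSemidef_conjTranspose_mul_self X))
  rwa [msqrt_eq (Matrix.posSemidef_conjTranspose_mul_self X)] at this

lemma kron_conjT {m p : Type*} [Fintype m] [Fintype p] (A : Matrix m m ℂ) (B : Matrix p p ℂ) :
    (A ⊗ₖ B)ᴴ = Aᴴ ⊗ₖ Bᴴ := by
  ext ⟨i, j⟩ ⟨k, l⟩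
  simp [conjTranspose_apply, mul_comm]



lemma unitary_decomp (V : Matrix (Fin 2) (Fin 2) ℂ) (hV : Vᴴ * V = 1) :
    ∃ (e : ℂ) (c s : ℝ) (W₀ : Matrix (Fin 2) (Fin 2) ℂ),
      e * (starRingEnd ℂ) e = 1 ∧ c^2 + s^2 = 1 ∧ W₀ᴴ * W₀ = 1 ∧
      V = e • ((c:ℂ) • (1 : Matrix (Fin 2) (Fin 2) ℂ) +
        ((s:ℂ) * Complex.I) • (W₀ * !![(1:ℂ),0;0,-1] * W₀ᴴ)) := by
  have hV' : V * Vᴴ = 1 := mul_eq_one_comm.mp hV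
  set K := starRingEnd ℂ
  set a := V 0 0 with ha'
  set b := V 0 1 with hb'
  set g := V 1 0 with hg'
  set h := V 1 1 with hh'
  have F1 : a * K a + b * K b = 1 := by
    have := congrFun (congrFun hV' 0) 0
    simpa [Matrix.mul_apply, Fin.sum_univ_two, Matrix.conjTranspose_apply, Matrix.one_apply] using this
  have F2 : g * K a + h * K b = 0 := by
    have := congrFun (congrFun hV' 1) 0
    simpa [Matrix.mul_apply, Fin.sum_univ_two, Matrix.conjTranspose_apply, Matrix.one_apply] using this
  set Δ := a * h - b * g with hΔ'
  have hΔ : Δ * K Δ = 1 := by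
    have hd := congrArg Matrix.det hV'
    rw [Matrix.det_mul, Matrix.det_conjTranspose, Matrix.det_one] at hd
    rw [hΔ', ← Matrix.det_fin_two V]
    exact hd
  have hH : h = Δ * K a := by
    rw [hΔ']
    linear_combination (-h) * F1 + b * F2
  have hG : g = -(Δ * K b) := by
    rw [hΔ']
    linear_combination (-g) * F1 + a * F2
  have habsΔ : ‖Δ‖ = 1 := by
    have : (Complex.normSq Δ : ℂ) = 1 := by rw [← Complex.mul_conj]; exact hΔ
    have h2 : Complex.normSq Δ = 1 := by exact_mod_cast this
    rw [Complex.norm_def, h2, Real.sqrt_one]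
  set φ : ℝ := Δ.arg / 2 with hφ'
  set e := Complex.exp ((φ:ℂ) * Complex.I) with he'
  have hee : e * K e = 1 := by
    rw [he', ← Complex.exp_conj]
    rw [← Complex.exp_add]
    have : (φ:ℂ) * Complex.I + K ((φ:ℂ) * Complex.I) = 0 := by
      rw [show K ((φ:ℂ) * Complex.I) = (starRingEnd ℂ) ((φ:ℂ) * Complex.I) from rfl,
        _root_.map_mul, Complex.conj_ofReal, Complex.conj_I]
      ring
    rw [this, Complex.exp_zero]
  have he2 : e * e = Δ := by
    rw [he', ← Complex.exp_add]
    have : (φ:ℂ) * Complex.I + (φ:ℂ) * Complex.I = (Δ.arg : ℂ) * Complex.I := by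
      rw [hφ']; push_cast; ring
    rw [this]
    have := Complex.norm_mul_exp_arg_mul_I Δ
    rwa [habsΔ, Complex.ofReal_one, one_mul] at this
  have habse : ‖e‖ = 1 := by rw [he']; exact Complex.norm_exp_ofReal_mul_I φ
  set μ := K e * a with hμ'
  set β := K e * b with hβ'
  have hμa : e * μ = a := by rw [hμ']; linear_combination a * hee
  have hβb : e * β = b := by rw [hβ']; linear_combination b * hee
  have hab : Complex.normSq a + Complex.normSq b = 1 := by
    have := F1
    rw [show K a = (starRingEnd ℂ) a from rfl, show K b = (starRingEnd ℂ) b from rfl,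
      Complex.mul_conj, Complex.mul_conj] at this
    exact_mod_cast this
  have hnormμβ : Complex.normSq μ + Complex.normSq β = 1 := by
    rw [hμ', hβ']
    have hKe : Complex.normSq (K e) = 1 := by
      rw [show K e = (starRingEnd ℂ) e from rfl, Complex.normSq_conj,
        Complex.normSq_eq_norm_sq, habse]; norm_num
    rw [Complex.normSq_mul, Complex.normSq_mul, hKe, one_mul, one_mul]
    exact hab
  set c : ℝ := μ.re with hc'
  have h1c : 1 - c^2 = μ.im^2 + Complex.normSq β := by
    have : Complex.normSq μ = c^2 + μ.im^2 := by rw [Complex.normSq_apply, hc']; ring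
    linarith [hnormμβ, this]
  have h1c0 : 0 ≤ 1 - c^2 := by
    rw [h1c]
    have := Complex.normSq_nonneg β
    nlinarith [sq_nonneg μ.im]
  set s : ℝ := Real.sqrt (1 - c^2) with hs'
  have hs2 : s^2 = 1 - c^2 := Real.sq_sqrt h1c0
  have hcs : c^2 + s^2 = 1 := by linarith
  by_cases hs0 : s = 0
  · -- degenerate case: V = e • (c • 1)
    have h10 : 1 - c^2 = 0 := by rw [← hs2, hs0]; ring
    have h0 : μ.im^2 + Complex.normSq β = 0 := by linarith [h1c]
    have him : μ.im = 0 := by nlinarith [Complex.normSq_nonneg β, sq_nonneg μ.im]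
    have hβ0 : β = 0 := by
      have : Complex.normSq β = 0 := by nlinarith [Complex.normSq_nonneg β, sq_nonneg μ.im]
      exact Complex.normSq_eq_zero.mp this
    have hμc : μ = (c:ℂ) := by
      apply Complex.ext
      · simp [hc']
      · simp [him]
    refine ⟨e, c, 0, 1, hee, by rw [hs0] at hcs; exact hcs, by simp, ?_⟩
    have hb0 : b = 0 := by rw [← hβb, hβ0, mul_zero]
    have hca : K a = K e * (c:ℂ) := by
      rw [← hμa, hμc, _root_.map_mul]
      have hKc : K ((c:ℂ)) = (c:ℂ) := Complex.conj_ofReal c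
      rw [hKc]
    ext i j
    fin_cases i <;> fin_cases j <;>
      simp only [Matrix.smul_apply, Matrix.add_apply, Matrix.one_apply, Matrix.mul_apply,
        smul_eq_mul, Complex.ofReal_zero, zero_mul, zero_smul, add_zero, Matrix.zero_apply] <;>
      norm_num
    · rw [← ha', ← hμa, hμc]
    · rw [← hb', hb0]
    · rw [← hg', hG, hb0]; simp
    · rw [← hh', hH, hca, ← he2]
      linear_combination (e * (c:ℂ)) * hee
  · have hsnn : 0 ≤ s := Real.sqrt_nonneg _
    have hspos : 0 < s := lt_of_le_of_ne hsnn (Ne.symm hs0)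
    have hsC : (s:ℂ) ≠ 0 := Complex.ofReal_ne_zero.mpr hs0
    set z : ℝ := μ.im / s with hz'
    set w : ℂ := (Complex.I * K β) / (s:ℂ) with hw'
    have hsz : (s:ℝ) * z = μ.im := by rw [hz']; field_simp
    have hnw : Complex.normSq w = Complex.normSq β / s^2 := by
      rw [hw', Complex.normSq_div, Complex.normSq_mul, Complex.normSq_I, one_mul]
      have h2 : Complex.normSq (K β) = Complex.normSq β := Complex.normSq_conj β
      rw [h2, Complex.normSq_ofReal]
      ring_nf
    have hz2 : z^2 + Complex.normSq w = 1 := by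
      rw [hnw, hz']
      field_simp
      linarith [h1c, hs2]
    have hμ : (c:ℂ) + (s:ℂ) * Complex.I * (z:ℂ) = μ := by
      calc (c:ℂ) + (s:ℂ) * Complex.I * (z:ℂ) = (μ.re:ℂ) + ((s*z : ℝ):ℂ) * Complex.I := by
            rw [hc']; push_cast; ring
      _ = (μ.re:ℂ) + (μ.im:ℂ) * Complex.I := by rw [hsz]
      _ = μ := Complex.re_add_im μ
    have hKw : K w = (-(Complex.I) * β) / (s:ℂ) := by
      rw [hw', map_div₀, _root_.map_mul]
      have h1 : K Complex.I = -Complex.I := Complex.conj_I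
      have h2 : K (K β) = β := Complex.conj_conj β
      have h3 : K ((s:ℂ)) = (s:ℂ) := Complex.conj_ofReal s
      rw [h1, h2, h3]
    have hβw : (s:ℂ) * Complex.I * K w = β := by
      rw [hKw]
      field_simp
      linear_combination (-β) * Complex.I_sq
    have hwβ : (s:ℂ) * Complex.I * w = -(K β) := by
      rw [hw']
      field_simp
      linear_combination (K β) * Complex.I_sq
    have hKμ : K μ = (c:ℂ) - (s:ℂ) * Complex.I * (z:ℂ) := by
      have k1 : K ((c:ℂ)) = (c:ℂ) := Complex.conj_ofReal c
      have k2 : K ((s:ℂ)) = (s:ℂ) := Complex.conj_ofReal s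
      have k3 : K ((z:ℂ)) = (z:ℂ) := Complex.conj_ofReal z
      have k4 : K Complex.I = -Complex.I := Complex.conj_I
      rw [← hμ, map_add, _root_.map_mul, _root_.map_mul, k1, k2, k3, k4]
      ring
    have hKb : K b = K e * K β := by rw [← hβb, _root_.map_mul]
    have hca2 : K a = K e * K μ := by rw [← hμa, _root_.map_mul]
    have A1 : a = e * ((c:ℂ) + (s:ℂ) * Complex.I * (z:ℂ)) := by rw [hμ]; exact hμa.symm
    have A2 : b = e * ((s:ℂ) * Complex.I * K w) := by rw [hβw]; exact hβb.symm
    have A3 : g = e * ((s:ℂ) * Complex.I * w) := by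
      rw [hG, ← he2, hKb, hwβ]
      linear_combination (-(e * K β)) * hee
    have A4 : h = e * ((c:ℂ) - (s:ℂ) * Complex.I * (z:ℂ)) := by
      rw [← hKμ, hH, hca2, ← he2]
      linear_combination (e * K μ) * hee
    have hVmat : V = !![a, b; g, h] := by
      ext i j
      fin_cases i <;> fin_cases j <;> rfl
    -- now find W₀ with S₀ = W₀ σz W₀ᴴ
    set S₀ : Matrix (Fin 2) (Fin 2) ℂ := !![(z:ℂ), K w; w, -(z:ℂ)] with hS₀'
    have hVdec : V = e • ((c:ℂ) • (1 : Matrix (Fin 2) (Fin 2) ℂ) +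
        ((s:ℂ) * Complex.I) • S₀) := by
      rw [hVmat, hS₀', Matrix.one_fin_two]
      rw [A1, A2, A3, A4]
      ext i j
      fin_cases i <;> fin_cases j <;>
        simp only [Fin.zero_eta, Fin.mk_one, Fin.isValue, Matrix.smul_apply, Matrix.add_apply,
          Matrix.of_apply, Matrix.cons_val', Matrix.cons_val_zero, Matrix.cons_val_one,
          Matrix.head_cons, Matrix.empty_val', Matrix.cons_val_fin_one, Matrix.head_fin_const,
          smul_eq_mul] <;> ring
    have hzle : z ≤ 1 := by nlinarith [Complex.normSq_nonneg w]
    have hct2 : ∀ (p q r t : ℂ), (!![p, q; r, t])ᴴ = !![K p, K r; K q, K t] := by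
      intro p q r t
      ext i j
      fin_cases i <;> fin_cases j <;> rfl
    clear_value e μ β c s z w S₀
    by_cases hz1 : z = 1
    · have hw0 : w = 0 := by
        have : Complex.normSq w = 0 := by rw [hz1] at hz2; linarith
        exact Complex.normSq_eq_zero.mp this
      refine ⟨e, c, s, 1, hee, hcs, by simp, ?_⟩
      have hS1 : (1 : Matrix (Fin 2) (Fin 2) ℂ) * !![(1:ℂ),0;0,-1] *
          (1 : Matrix (Fin 2) (Fin 2) ℂ)ᴴ = S₀ := by
        rw [Matrix.conjTranspose_one, Matrix.one_mul, Matrix.mul_one, hS₀', hz1, hw0]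
        have hK0 : K (0:ℂ) = 0 := map_zero K
        rw [hK0]
        ext i j
        fin_cases i <;> fin_cases j <;>
          simp only [Fin.zero_eta, Fin.mk_one, Fin.isValue, Matrix.smul_apply, Matrix.add_apply,
            Matrix.of_apply, Matrix.cons_val', Matrix.cons_val_zero, Matrix.cons_val_one,
            Matrix.head_cons, Matrix.empty_val', Matrix.cons_val_fin_one, Matrix.head_fin_const,
            smul_eq_mul] <;> norm_num
      rw [hS1]
      exact hVdec
    · have hzlt : z < 1 := lt_of_le_of_ne hzle hz1
      set nn : ℝ := Real.sqrt (2*(1-z)) with hn'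
      have hnpos : 0 < nn := Real.sqrt_pos.mpr (by linarith)
      have hn2 : nn^2 = 2*(1-z) := Real.sq_sqrt (by linarith)
      have hn0 : (nn:ℂ) ≠ 0 := Complex.ofReal_ne_zero.mpr (ne_of_gt hnpos)
      have hn2C : (nn:ℂ)^2 = 2*(1 - (z:ℂ)) := by exact_mod_cast congrArg Complex.ofReal hn2
      clear_value nn
      have hww : w * K w = 1 - (z:ℂ)^2 := by
        have h1 : w * K w = (Complex.normSq w : ℂ) := Complex.mul_conj w
        have h2 : Complex.normSq w = 1 - z^2 := by linarith only [hz2]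
        rw [h1, h2]; push_cast; ring
      set m : ℂ := ((nn:ℂ))⁻¹ with hm'
      have hKm : K m = m := by rw [hm', map_inv₀, Complex.conj_ofReal]
      clear_value m
      have hKz : K ((z:ℂ)) = (z:ℂ) := Complex.conj_ofReal z
      have hKKw : K (K w) = w := Complex.conj_conj w
      set W₀ : Matrix (Fin 2) (Fin 2) ℂ :=
        !![m * K w, -(m * (1-(z:ℂ))); m * (1-(z:ℂ)), m * w] with hW₀'
      have hW₀H : W₀ᴴ = !![m * w, m * (1-(z:ℂ)); -(m * (1-(z:ℂ))), m * K w] := by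
        rw [hW₀', hct2]
        simp only [_root_.map_mul, _root_.map_neg, _root_.map_sub, _root_.map_one,
          hKm, hKz, hKKw]
      have hmm : m * m * (2 * (1 - (z:ℂ))) = 1 := by
        rw [hm']
        field_simp
        first
          | linear_combination hn2C
          | linear_combination 2 * hn2C
          | linear_combination -hn2C
          | linear_combination -2 * hn2C
      have hW₀u : W₀ᴴ * W₀ = 1 := by
        rw [hW₀H, hW₀', Matrix.mul_fin_two, Matrix.one_fin_two]
        ext i j
        fin_cases i <;> fin_cases j <;>
          simp only [Fin.zero_eta, Fin.mk_one, Fin.isValue, Matrix.smul_apply, Matrix.add_apply,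
            Matrix.of_apply, Matrix.cons_val', Matrix.cons_val_zero, Matrix.cons_val_one,
            Matrix.head_cons, Matrix.empty_val', Matrix.cons_val_fin_one, Matrix.head_fin_const,
            smul_eq_mul] <;>
          first
            | linear_combination (m * m) * hww + hmm
            | ring
      have hS₀W : W₀ * !![(1:ℂ),0;0,-1] * W₀ᴴ = S₀ := by
        rw [hW₀', hW₀H, hS₀', Matrix.mul_fin_two, Matrix.mul_fin_two]
        ext i j
        fin_cases i <;> fin_cases j <;>
          simp only [Fin.zero_eta, Fin.mk_one, Fin.isValue, Matrix.smul_apply, Matrix.add_apply,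
            Matrix.of_apply, Matrix.cons_val', Matrix.cons_val_zero, Matrix.cons_val_one,
            Matrix.head_cons, Matrix.empty_val', Matrix.cons_val_fin_one, Matrix.head_fin_const,
            smul_eq_mul] <;>
          first
            | linear_combination (m * m) * hww + (z:ℂ) * hmm
            | linear_combination (K w) * hmm
            | linear_combination w * hmm
            | linear_combination (-(m * m)) * hww - (z:ℂ) * hmm
            | ring
      exact ⟨e, c, s, W₀, hee, hcs, hW₀u, by rw [hVdec, hS₀W]⟩

lemma key_bound (ρ S₂ : Matrix n n ℂ) (hSH : S₂ᴴ = S₂) (hSS : S₂ * S₂ = 1)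
    (e : ℂ) (hee : e * (starRingEnd ℂ) e = 1) (c s : ℝ) (hcs : c^2 + s^2 = 1) :
    traceNorm (ρ - (e • ((c:ℂ) • 1 + ((s:ℂ) * Complex.I) • S₂)) * ρ *
        (e • ((c:ℂ) • 1 + ((s:ℂ) * Complex.I) • S₂))ᴴ)
      ≤ traceNorm (ρ - S₂ * ρ * S₂ᴴ) := by
  set Y := ρ - S₂ * ρ * S₂ᴴ with hY
  set M : Matrix n n ℂ := (s:ℂ) • 1 - ((c:ℂ) * Complex.I) • S₂ with hM
  have hS2 : ∀ X : Matrix n n ℂ, S₂ * (S₂ * X) = X := by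
    intro X; rw [← Matrix.mul_assoc, hSS, Matrix.one_mul]
  have hC : ((c:ℂ))^2 + ((s:ℂ))^2 = 1 := by exact_mod_cast congrArg (Complex.ofReal) hcs
  have hphase : ∀ A : Matrix n n ℂ, (e • A) * ρ * (e • A)ᴴ = A * ρ * Aᴴ := by
    intro A
    rw [conjTranspose_smul, Matrix.smul_mul, Matrix.smul_mul, Matrix.mul_smul, smul_smul,
      Complex.star_def, hee, one_smul]
  have hX : ρ - (e • ((c:ℂ) • 1 + ((s:ℂ) * Complex.I) • S₂)) * ρ *
      (e • ((c:ℂ) • 1 + ((s:ℂ) * Complex.I) • S₂))ᴴ = (s:ℂ) • (M * Y) := by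
    rw [hphase]
    simp only [conjTranspose_add, conjTranspose_smul, conjTranspose_one,
      hSH, Complex.star_def, _root_.map_mul, Complex.conj_ofReal, Complex.conj_I, hY, hM]
    simp only [Matrix.mul_add, Matrix.add_mul, Matrix.mul_sub, Matrix.sub_mul,
      Matrix.mul_smul, Matrix.smul_mul, smul_smul, smul_add, smul_sub,
      Matrix.one_mul, Matrix.mul_one, Matrix.mul_assoc, hS2]
    match_scalars <;>
      first
        | linear_combination (-1 : ℂ) * hC
        | linear_combination ((s:ℂ)^2) * Complex.I_sq
        | linear_combination ((s:ℂ)^2) * Complex.I_sq - hC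
        | linear_combination (-(s:ℂ)^2) * Complex.I_sq
        | ring
  have hMM : Mᴴ * M = 1 := by
    simp only [hM, conjTranspose_sub, conjTranspose_smul, conjTranspose_one, hSH,
      Complex.star_def, _root_.map_mul, Complex.conj_ofReal, Complex.conj_I]
    simp only [Matrix.sub_mul, Matrix.mul_sub, Matrix.smul_mul, Matrix.mul_smul, smul_smul,
      Matrix.one_mul, Matrix.mul_one, hSS, smul_sub]
    match_scalars <;>
      first
        | linear_combination hC - ((c:ℂ)^2) * Complex.I_sq
        | linear_combination ((c:ℂ)^2) * Complex.I_sq + hC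
        | ring
  have hXX : (((s:ℂ) • (M * Y))ᴴ) * ((s:ℂ) • (M * Y)) = ((s^2 : ℝ) : ℂ) • (Yᴴ * Y) := by
    rw [conjTranspose_smul, Matrix.smul_mul, Matrix.mul_smul, smul_smul, conjTranspose_mul,
      Matrix.mul_assoc, ← Matrix.mul_assoc Mᴴ, hMM, Matrix.one_mul]
    congr 1
    rw [Complex.star_def, Complex.conj_ofReal]
    push_cast; ring
  rw [hX]
  have hYpsd := Matrix.posSemidef_conjTranspose_mul_self Y
  have h1 : traceNorm ((s:ℂ) • (M * Y)) = Real.sqrt (s^2) * traceNorm Y := by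
    unfold traceNorm
    rw [hXX, msqrt_smul hYpsd (sq_nonneg s), Matrix.trace_smul, smul_eq_mul,
      Complex.re_ofReal_mul]
  rw [h1, Real.sqrt_sq_eq_abs]
  have habs : |s| ≤ 1 := by
    rw [abs_le]
    constructor <;> nlinarith [sq_nonneg c, sq_nonneg s]
  exact mul_le_of_le_one_left (traceNorm_nonneg Y) habs

end Aux

set_option maxHeartbeats 2000000 in
theorem harmonic_spectrum_maximizes_min_trace_distance
    (d : ℕ) (hd : 0 < d)
    (ρ : Matrix (Fin 2 × Fin d) (Fin 2 × Fin d) ℂ)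
    (hρ : ρ.PosSemidef) (htr : ρ.trace = 1)
    (V : Matrix (Fin 2) (Fin 2) ℂ) (hV : Vᴴ * V = 1) :
    sInf {r : ℝ | ∃ W : Matrix (Fin 2) (Fin 2) ℂ, Wᴴ * W = 1 ∧
        r = traceNorm (ρ - ((W * V * Wᴴ) ⊗ₖ (1 : Matrix (Fin d) (Fin d) ℂ)) * ρ *
          ((W * V * Wᴴ) ⊗ₖ (1 : Matrix (Fin d) (Fin d) ℂ))ᴴ)}
      ≤ sInf {r : ℝ | ∃ W : Matrix (Fin 2) (Fin 2) ℂ, Wᴴ * W = 1 ∧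
        r = traceNorm (ρ - ((W * !![1, 0; 0, -1] * Wᴴ) ⊗ₖ (1 : Matrix (Fin d) (Fin d) ℂ)) * ρ *
          ((W * !![1, 0; 0, -1] * Wᴴ) ⊗ₖ (1 : Matrix (Fin d) (Fin d) ℂ))ᴴ)} := by
  obtain ⟨e, c, s, W₀, hee, hcs, hW₀, hdecomp⟩ := unitary_decomp V hV
  have hbdd : BddBelow {r : ℝ | ∃ W : Matrix (Fin 2) (Fin 2) ℂ, Wᴴ * W = 1 ∧
      r = traceNorm (ρ - ((W * V * Wᴴ) ⊗ₖ (1 : Matrix (Fin d) (Fin d) ℂ)) * ρ *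
        ((W * V * Wᴴ) ⊗ₖ (1 : Matrix (Fin d) (Fin d) ℂ))ᴴ)} := by
    refine ⟨0, ?_⟩
    rintro x ⟨W', _, rfl⟩
    exact traceNorm_nonneg _
  apply le_csInf
  · exact ⟨_, 1, by simp, rfl⟩
  · rintro r ⟨W, hW, rfl⟩
    have hmk : ∀ (A B : Matrix (Fin 2) (Fin 2) ℂ), A * B = 1 →
        ∀ X : Matrix (Fin 2) (Fin 2) ℂ, A * (B * X) = X := by
      intro A B hAB X
      rw [← Matrix.mul_assoc, hAB, Matrix.one_mul]
    have hσH : (!![(1:ℂ), 0; 0, -1])ᴴ = !![(1:ℂ), 0; 0, -1] := by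
      ext i j
      fin_cases i <;> fin_cases j <;> simp [Matrix.conjTranspose_apply]
    have hσ2 : !![(1:ℂ), 0; 0, -1] * !![(1:ℂ), 0; 0, -1] = 1 := by
      rw [Matrix.mul_fin_two, Matrix.one_fin_two]
      norm_num
    have hWW' : W * Wᴴ = 1 := mul_eq_one_comm.mp hW
    have hW₀W₀' : W₀ * W₀ᴴ = 1 := mul_eq_one_comm.mp hW₀
    set S : Matrix (Fin 2) (Fin 2) ℂ := W * !![(1:ℂ), 0; 0, -1] * Wᴴ with hS'
    have hSH : Sᴴ = S := by
      rw [hS', Matrix.conjTranspose_mul, Matrix.conjTranspose_mul,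
        Matrix.conjTranspose_conjTranspose, hσH, Matrix.mul_assoc]
    have hSS : S * S = 1 := by
      rw [hS']
      simp only [Matrix.mul_assoc]
      rw [hmk Wᴴ W hW, hmk _ _ hσ2]
      exact hWW'
    have hU2 : (W * W₀ᴴ)ᴴ * (W * W₀ᴴ) = 1 := by
      rw [Matrix.conjTranspose_mul, Matrix.conjTranspose_conjTranspose, Matrix.mul_assoc,
        hmk Wᴴ W hW]
      exact hW₀W₀'
    have hUdec : (W * W₀ᴴ) * V * (W * W₀ᴴ)ᴴ =
        e • ((c:ℂ) • (1 : Matrix (Fin 2) (Fin 2) ℂ) + ((s:ℂ) * Complex.I) • S) := by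
      rw [hdecomp, Matrix.conjTranspose_mul, Matrix.conjTranspose_conjTranspose,
        Matrix.mul_smul, Matrix.smul_mul]
      congr 1
      rw [Matrix.mul_add, Matrix.add_mul, Matrix.mul_smul, Matrix.mul_smul,
        Matrix.smul_mul, Matrix.smul_mul]
      congr 1
      · congr 1
        rw [Matrix.mul_one, Matrix.mul_assoc, hmk W₀ᴴ W₀ hW₀]
        exact hWW'
      · congr 1
        rw [hS']
        simp only [Matrix.mul_assoc]
        rw [hmk W₀ᴴ W₀ hW₀, hmk W₀ᴴ W₀ hW₀]
    set S₂ : Matrix (Fin 2 × Fin d) (Fin 2 × Fin d) ℂ :=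
      S ⊗ₖ (1 : Matrix (Fin d) (Fin d) ℂ) with hS₂'
    have hS₂H : S₂ᴴ = S₂ := by
      rw [hS₂', kron_conjT, hSH, Matrix.conjTranspose_one]
    have hS₂S₂ : S₂ * S₂ = 1 := by
      rw [hS₂', ← Matrix.mul_kronecker_mul, hSS, Matrix.one_mul, Matrix.one_kronecker_one]
    have hU₂ : ((W * W₀ᴴ) * V * (W * W₀ᴴ)ᴴ) ⊗ₖ (1 : Matrix (Fin d) (Fin d) ℂ) =
        e • ((c:ℂ) • (1 : Matrix (Fin 2 × Fin d) (Fin 2 × Fin d) ℂ) +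
          ((s:ℂ) * Complex.I) • S₂) := by
      rw [hUdec, Matrix.smul_kronecker, Matrix.add_kronecker, Matrix.smul_kronecker,
        Matrix.smul_kronecker, Matrix.one_kronecker_one, hS₂']
    refine le_trans (csInf_le hbdd ⟨W * W₀ᴴ, hU2, rfl⟩) ?_
    rw [hU₂]
    exact key_bound ρ S₂ hS₂H hS₂S₂ e hee c s hcs
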